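/- Let n be a positive natural number, κ ∈ (0,1], and let λ₁, ..., λₙ, λ̃ be (n+1) independent and identically distributed real-valued random variables whose common distribution is atomless. Suppose 1 − κ ≤ 1 − 1/(n+1), and set k = ⌈(n+1)(1−κ)⌉ (so 1 ≤ k ≤ n). Letting λ_(k) denote the k-th smallest value among λ₁, ..., λₙ, the probability P(λ̃ > λ_(k)) is at most κ. -/

import Mathlib

open MeasureTheory ProbabilityTheory
open scoped ENNReal

/-- The `k`-th order statistic (the `k`-th smallest value, `1 ≤ k ≤ n`) of the
values `v 0, ..., v (n-1)`: the element at position `k - 1` of the list of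
values sorted in nondecreasing order. -/
noncomputable def orderStat (n : ℕ) (k : ℕ) (v : Fin n → ℝ) : ℝ :=
  (List.insertionSort (· ≤ ·) (List.ofFn v)).getD (k - 1) 0


lemma countP_ofFn {n : ℕ} (v : Fin n → ℝ) (p : ℝ → Bool) :
    (List.ofFn v).countP p = (Finset.univ.filter (fun i => p (v i))).card := by
  induction n with
  | zero => simp
  | succ m ih =>
    rw [List.ofFn_succ, List.countP_cons, ih]
    rw [Finset.card_filter, Finset.card_filter, Fin.sum_univ_succ]
    simp [add_comm]

lemma card_filter_val_lt (n t : ℕ) (ht : t ≤ n) :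
    (Finset.univ.filter (fun j : Fin n => (j : ℕ) < t)).card = t := by
  refine Finset.card_eq_of_bijective (fun i h => ⟨i, lt_of_lt_of_le h ht⟩) ?_ ?_ ?_
  · intro a ha
    simp only [Finset.mem_filter] at ha
    exact ⟨a, ha.2, rfl⟩
  · intro i h; simp [h]
  · intro i j hi hj hij
    simpa using congrArg Fin.val hij

lemma orderStat_lt_iff {n k : ℕ} (hk1 : 1 ≤ k) (hkn : k ≤ n) (v : Fin n → ℝ) (y : ℝ) :
    orderStat n k v < y ↔ k ≤ (Finset.univ.filter (fun i => v i < y)).card := by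
  classical
  set l := List.insertionSort (· ≤ ·) (List.ofFn v) with hl
  have hperm : l.Perm (List.ofFn v) := List.perm_insertionSort _ _
  have hsort : List.Pairwise (· ≤ ·) l := List.pairwise_insertionSort _ _
  have hlen : l.length = n := by rw [hperm.length_eq, List.length_ofFn]
  have hcnt : l.countP (fun a => decide (a < y)) =
      (Finset.univ.filter (fun i => v i < y)).card := by
    rw [hperm.countP_eq, countP_ofFn]
    simp
  -- express countP of l via indices
  have hcnt2 : l.countP (fun a => decide (a < y)) =
      (Finset.univ.filter (fun i : Fin l.length => l.get i < y)).card := by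
    conv_lhs => rw [← List.ofFn_get l]
    rw [countP_ofFn]
    simp
  set A := Finset.univ.filter (fun i : Fin l.length => l.get i < y) with hA
  have hdc : ∀ i j : Fin l.length, i ≤ j → j ∈ A → i ∈ A := by
    intro i j hij hj
    simp only [hA, Finset.mem_filter, Finset.mem_univ, true_and] at hj ⊢
    rcases lt_or_eq_of_le hij with h | h
    · exact lt_of_le_of_lt (List.pairwise_iff_get.mp hsort i j h) hj
    · rwa [show i = j from Fin.ext (congrArg Fin.val h)]
  have hmem_iff : ∀ i : Fin l.length, i ∈ A ↔ (i : ℕ) < A.card := by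
    intro i
    constructor
    · intro hi
      have hsub : Finset.univ.filter (fun j : Fin l.length => (j : ℕ) < (i : ℕ) + 1) ⊆ A := by
        intro j hj
        simp only [Finset.mem_filter, Finset.mem_univ, true_and] at hj
        exact hdc j i (by omega) hi
      have := Finset.card_le_card hsub
      rwa [card_filter_val_lt _ _ (by omega)] at this
    · intro hi
      by_contra hcon
      have hsub : A ⊆ Finset.univ.filter (fun j : Fin l.length => (j : ℕ) < (i : ℕ)) := by
        intro j hj
        simp only [Finset.mem_filter, Finset.mem_univ, true_and]
        by_contra hji
        exact hcon (hdc i j (by omega) hj)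
      have := Finset.card_le_card hsub
      rw [card_filter_val_lt _ _ (le_of_lt i.isLt)] at this
      omega
  have hklt : k - 1 < l.length := by omega
  have hOS : orderStat n k v = l.get ⟨k - 1, hklt⟩ := by
    rw [orderStat, ← hl, List.getD_eq_getElem _ _ hklt, List.get_eq_getElem]
  rw [hOS, ← hcnt, hcnt2]
  have := hmem_iff ⟨k - 1, hklt⟩
  simp only [hA, Finset.mem_filter, Finset.mem_univ, true_and] at this
  rw [← hA] at this
  rw [this]
  omega


lemma map_comp_perm {m : ℕ} (μ : Measure ℝ) [IsProbabilityMeasure μ]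
    (σ : Equiv.Perm (Fin m)) :
    Measure.map (fun x : Fin m → ℝ => x ∘ σ) (Measure.pi fun _ => μ) =
      Measure.pi fun _ => μ := by
  have hT : Measurable (fun x : Fin m → ℝ => x ∘ σ) :=
    measurable_pi_lambda _ fun j => measurable_pi_apply (σ j)
  refine (Measure.pi_eq fun s hs => ?_).symm
  rw [Measure.map_apply hT (MeasurableSet.univ_pi hs)]
  have hpre : (fun x : Fin m → ℝ => x ∘ σ) ⁻¹' Set.univ.pi s =
      Set.univ.pi (fun j => s (σ.symm j)) := by
    ext x
    simp only [Set.mem_preimage, Set.mem_pi, Set.mem_univ, true_implies, Function.comp]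
    constructor
    · intro h j; have := h (σ.symm j); rwa [Equiv.apply_symm_apply] at this
    · intro h i; have := h (σ i); rwa [Equiv.symm_apply_apply] at this
  rw [hpre, Measure.pi_pi]
  exact Equiv.prod_comp σ.symm (fun i => μ (s i))


/-- Conformal calibration bound (probabilistic core of Proposition 1):
if `λ₁, ..., λₙ, λ̃` are i.i.d. with atomless common distribution,
`κ ∈ (0, 1]` satisfies `1 - κ ≤ 1 - 1/(n+1)`, and
`k = ⌈(n+1)(1-κ)⌉`, then `P(λ̃ > λ_(k)) ≤ κ`. -/
theorem conformal_bound
    {Ω : Type*} [MeasurableSpace Ω] (P : Measure Ω) [IsProbabilityMeasure P]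
    (n : ℕ) (hn : 1 ≤ n)
    (X : Fin n → Ω → ℝ) (Y : Ω → ℝ)
    (hX : ∀ i, Measurable (X i)) (hY : Measurable Y)
    (μ : Measure ℝ) [IsProbabilityMeasure μ] [NullSingletonClass μ]
    (hlawX : ∀ i, Measure.map (X i) P = μ) (hlawY : Measure.map Y P = μ)
    (hindep : iIndepFun
      (Fin.snoc (fun i : Fin n => X i) Y : Fin (n + 1) → Ω → ℝ) P)
    (κ : ℝ) (hκ0 : 0 < κ) (hκ1 : κ ≤ 1)
    (hcase : 1 - κ ≤ 1 - 1 / ((n : ℝ) + 1))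
    (k : ℕ) (hk : k = ⌈((n : ℝ) + 1) * (1 - κ)⌉₊) :
    P {ω | orderStat n k (fun i => X i ω) < Y ω} ≤ ENNReal.ofReal κ := by
  classical
  rcases le_or_gt 1 κ with hκge | hκlt
  · calc P {ω | orderStat n k (fun i => X i ω) < Y ω}
        ≤ P Set.univ := measure_mono (Set.subset_univ _)
      _ = 1 := measure_univ
      _ ≤ ENNReal.ofReal κ := by
          rw [← ENNReal.ofReal_one]; exact ENNReal.ofReal_le_ofReal hκge
  have hnpos : (0:ℝ) < (n:ℝ) + 1 := by positivity
  have hk1 : 1 ≤ k := by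
    rw [hk]
    exact Nat.ceil_pos.mpr (by nlinarith)
  have hkn : k ≤ n := by
    rw [hk]
    refine Nat.ceil_le.mpr ?_
    have hfield : ((n:ℝ)+1) * (1 - 1/((n:ℝ)+1)) = n := by field_simp; ring
    nlinarith [mul_le_mul_of_nonneg_left hcase (le_of_lt hnpos)]
  classical
  set f : Fin (n+1) → Ω → ℝ := Fin.snoc (fun i : Fin n => X i) Y with hf
  have hf_meas : ∀ i, Measurable (f i) := by
    intro i
    refine Fin.lastCases ?_ ?_ i
    · simp only [hf, Fin.snoc_last]; exact hY
    · intro j; simp only [hf, Fin.snoc_castSucc]; exact hX j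
  have hf_law : ∀ i, Measure.map (f i) P = μ := by
    intro i
    refine Fin.lastCases ?_ ?_ i
    · simp only [hf, Fin.snoc_last]; exact hlawY
    · intro j; simp only [hf, Fin.snoc_castSucc]; exact hlawX j
  set Z : Ω → (Fin (n+1) → ℝ) := fun ω i => f i ω with hZdef
  have hZ : Measurable Z := measurable_pi_lambda _ hf_meas
  set ν : Measure (Fin (n+1) → ℝ) := Measure.pi (fun _ => μ) with hν
  have hZmap : Measure.map Z P = ν := by
    refine (Measure.pi_eq fun s hs => ?_).symm
    rw [Measure.map_apply hZ (MeasurableSet.univ_pi hs)]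
    have hpre : Z ⁻¹' Set.univ.pi s = ⋂ i, f i ⁻¹' s i := by
      ext ω; simp [hZdef, Set.mem_pi]
    rw [hpre]
    have := hindep.measure_inter_preimage_eq_mul Finset.univ
      (sets := s) (fun i _ => hs i)
    rw [show (⋂ i, f i ⁻¹' s i) = ⋂ i ∈ Finset.univ, f i ⁻¹' s i by simp, this]
    exact Finset.prod_congr rfl fun i _ => by
      rw [← Measure.map_apply (hf_meas i) (hs i), hf_law i]
  -- ties are null
  have hties : ∀ i j : Fin (n+1), i ≠ j → ν {x | x i = x j} = 0 := by
    intro i j hij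
    have hmeas : MeasurableSet {x : Fin (n+1) → ℝ | x i = x j} :=
      measurableSet_eq_fun (measurable_pi_apply i) (measurable_pi_apply j)
    rw [hν] at hZmap ⊢
    rw [← hZmap, Measure.map_apply hZ hmeas]
    have hIF : IndepFun (f i) (f j) P := hindep.indepFun hij
    have hpair : Measure.map (fun ω => (f i ω, f j ω)) P = μ.prod μ := by
      rw [(indepFun_iff_map_prod_eq_prod_map_map (hf_meas i).aemeasurable
        (hf_meas j).aemeasurable).mp hIF, hf_law i, hf_law j]
    have hD : MeasurableSet {p : ℝ × ℝ | p.1 = p.2} :=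
      measurableSet_eq_fun measurable_fst measurable_snd
    have : Z ⁻¹' {x | x i = x j} = (fun ω => (f i ω, f j ω)) ⁻¹' {p : ℝ × ℝ | p.1 = p.2} := by
      ext ω; simp [hZdef]
    rw [this, ← Measure.map_apply ((hf_meas i).prodMk (hf_meas j)) hD, hpair]
    -- diagonal null
    rw [Measure.prod_apply hD]
    have hsing : ∀ x : ℝ, (Prod.mk x ⁻¹' {p : ℝ × ℝ | p.1 = p.2}) = {x} := by
      intro x; ext y; simp [eq_comm]
    simp [hsing]
  -- the bad set of ties
  set Tset : Set (Fin (n+1) → ℝ) := ⋃ (i : Fin (n+1)) (j : Fin (n+1)) (_ : i ≠ j), {x | x i = x j}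
    with hTset
  have hT_meas : MeasurableSet Tset := by
    refine MeasurableSet.iUnion fun i => MeasurableSet.iUnion fun j => MeasurableSet.iUnion fun _ => ?_
    exact measurableSet_eq_fun (measurable_pi_apply i) (measurable_pi_apply j)
  have hT_null : ν Tset = 0 := by
    refine measure_iUnion_null fun i => measure_iUnion_null fun j => measure_iUnion_null fun h => hties i j h
  have hT_inj : ∀ x, x ∉ Tset → Function.Injective x := by
    intro x hx i j hxij
    by_contra hne
    exact hx (Set.mem_iUnion.mpr ⟨i, Set.mem_iUnion.mpr ⟨j, Set.mem_iUnion.mpr ⟨hne, hxij⟩⟩⟩)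
  -- rank counts
  set cnt : Fin (n+1) → (Fin (n+1) → ℝ) → ℕ :=
    fun i x => (Finset.univ.filter fun j => x j < x i).card with hcnt
  have hcnt_meas : ∀ i, Measurable (cnt i) := by
    intro i
    have : cnt i = fun x => ∑ j : Fin (n+1), if x j < x i then 1 else 0 := by
      funext x; rw [hcnt]; exact Finset.card_filter _ _
    rw [this]
    exact Finset.measurable_sum _ fun j _ =>
      Measurable.ite (measurableSet_lt (measurable_pi_apply j) (measurable_pi_apply i))
        measurable_const measurable_const
  set E : Fin (n+1) → ℕ → Set (Fin (n+1) → ℝ) := fun i m => cnt i ⁻¹' {m} with hE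
  have hE_meas : ∀ i m, MeasurableSet (E i m) :=
    fun i m => (hcnt_meas i) (measurableSet_singleton m)
  -- cnt under permutation
  have hcnt_perm : ∀ (σ : Equiv.Perm (Fin (n+1))) (x : Fin (n+1) → ℝ) (i : Fin (n+1)),
      cnt i (x ∘ σ) = cnt (σ i) x := by
    intro σ x i
    rw [hcnt]
    refine Finset.card_bij' (fun j _ => σ j) (fun j _ => σ.symm j) ?_ ?_ ?_ ?_
    · intro a ha
      simp only [Finset.mem_filter, Finset.mem_univ, true_and, Function.comp_apply] at ha ⊢
      exact ha
    · intro a ha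
      simp only [Finset.mem_filter, Finset.mem_univ, true_and, Function.comp_apply] at ha ⊢
      simpa using ha
    · intro a _; exact Equiv.symm_apply_apply σ a
    · intro a _; exact Equiv.apply_symm_apply σ a
  -- symmetry : all E i m have the same measure
  have hsym : ∀ i m, ν (E i m) = ν (E (Fin.last n) m) := by
    intro i m
    set σ := Equiv.swap i (Fin.last n) with hσ
    set T : (Fin (n+1) → ℝ) → (Fin (n+1) → ℝ) := fun x => x ∘ σ with hTdef
    have hTmeas : Measurable T := measurable_pi_lambda _ fun j => measurable_pi_apply (σ j)
    have hmapT : Measure.map T ν = ν := by rw [hν]; exact map_comp_perm μ σ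
    have hpre : T ⁻¹' (E i m) = E (Fin.last n) m := by
      ext x
      simp only [hE, Set.mem_preimage, Set.mem_singleton_iff]
      rw [hTdef]
      simp only []
      rw [hcnt_perm σ x i, hσ, Equiv.swap_apply_left]
    calc ν (E i m) = Measure.map T ν (E i m) := by rw [hmapT]
      _ = ν (T ⁻¹' (E i m)) := Measure.map_apply hTmeas (hE_meas i m)
      _ = ν (E (Fin.last n) m) := by rw [hpre]
  -- cnt is bounded by n
  have hcnt_le : ∀ i x, cnt i x ≤ n := by
    intro i x
    rw [hcnt]
    have hsub : (Finset.univ.filter fun j => x j < x i) ⊆ Finset.univ.erase i := by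
      intro j hj
      simp only [Finset.mem_filter] at hj
      refine Finset.mem_erase.mpr ⟨?_, Finset.mem_univ j⟩
      rintro rfl; exact lt_irrefl _ hj.2
    have := Finset.card_le_card hsub
    simpa using this
  -- injectivity of cnt · x for injective x
  have hcnt_inj : ∀ x, Function.Injective x → ∀ i j, i ≠ j → cnt i x ≠ cnt j x := by
    intro x hx i j hij
    have key : ∀ a b : Fin (n+1), x a < x b → cnt a x < cnt b x := by
      intro a b hab
      rw [hcnt]
      refine Finset.card_lt_card ?_
      constructor
      · intro l hl
        simp only [Finset.mem_filter, Finset.mem_univ, true_and] at hl ⊢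
        exact lt_trans hl hab
      · intro hsub
        have : a ∈ Finset.univ.filter fun j => x j < x b := by
          simp [hab]
        have := hsub this
        simp only [Finset.mem_filter, Finset.mem_univ, true_and] at this
        exact lt_irrefl _ this
    rcases lt_or_gt_of_ne (fun h => hij (hx h)) with h | h
    · exact ne_of_lt (key i j h)
    · exact ne_of_gt (key j i h)
  -- each rank value m ≤ n is achieved for injective x
  have hcnt_surj : ∀ x, Function.Injective x → ∀ m ≤ n, ∃ i, cnt i x = m := by
    intro x hx m hm
    set g : Fin (n+1) → Fin (n+1) := fun i => ⟨cnt i x, Nat.lt_succ_of_le (hcnt_le i x)⟩ with hg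
    have hginj : Function.Injective g := by
      intro i j hgij
      by_contra hne
      exact hcnt_inj x hx i j hne (congrArg Fin.val hgij)
    have hgsurj : Function.Surjective g := Finite.surjective_of_injective hginj
    obtain ⟨i, hi⟩ := hgsurj ⟨m, Nat.lt_succ_of_le hm⟩
    exact ⟨i, congrArg Fin.val hi⟩
  -- sum over i of ν (E i m) equals 1 for m ≤ n
  have hsum : ∀ m ≤ n, ∑ i : Fin (n+1), ν (E i m) = 1 := by
    intro m hm
    set D : Fin (n+1) → Set (Fin (n+1) → ℝ) := fun i => E i m \ Tset with hD
    have hD_meas : ∀ i, MeasurableSet (D i) := fun i => (hE_meas i m).diff hT_meas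
    have hED : ∀ i, ν (E i m) = ν (D i) := fun i => (measure_diff_null hT_null).symm
    have hdisj : Pairwise (Function.onFun Disjoint D) := by
      intro i j hij
      refine Set.disjoint_left.mpr ?_
      intro x hxi hxj
      have hinj := hT_inj x hxi.2
      exact hcnt_inj x hinj i j hij (hxi.1.trans hxj.1.symm)
    have hunion : (⋃ i, D i) = Tsetᶜ := by
      ext x
      simp only [Set.mem_iUnion, Set.mem_compl_iff]
      constructor
      · rintro ⟨i, hi⟩; exact hi.2
      · intro hx
        obtain ⟨i, hi⟩ := hcnt_surj x (hT_inj x hx) m hm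
        exact ⟨i, ⟨hi, hx⟩⟩
    calc ∑ i : Fin (n+1), ν (E i m) = ∑ i : Fin (n+1), ν (D i) := by
          exact Finset.sum_congr rfl fun i _ => hED i
      _ = ν (⋃ i, D i) := by rw [measure_iUnion hdisj hD_meas, tsum_fintype]
      _ = ν Tsetᶜ := by rw [hunion]
      _ = 1 := by
          have := measure_compl hT_meas (measure_ne_top ν Tset)
          rw [this, hT_null, measure_univ, tsub_zero]
  -- value of ν (E (last) m)
  have hElast : ∀ m ≤ n, ν (E (Fin.last n) m) = (((n : ℝ≥0∞) + 1))⁻¹ := by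
    intro m hm
    have h1 : (↑n + 1 : ℝ≥0∞) * ν (E (Fin.last n) m) = 1 := by
      have := hsum m hm
      rw [Finset.sum_congr rfl (fun i _ => hsym i m)] at this
      rw [Finset.sum_const, Finset.card_univ, Fintype.card_fin] at this
      rw [nsmul_eq_mul] at this
      push_cast at this
      exact this
    have hne : ((n : ℝ≥0∞) + 1) ≠ 0 := by simp
    have hnt : ((n : ℝ≥0∞) + 1) ≠ ⊤ := by simp
    calc ν (E (Fin.last n) m) = ((n : ℝ≥0∞) + 1)⁻¹ * (((n : ℝ≥0∞) + 1) * ν (E (Fin.last n) m)) := by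
          rw [← mul_assoc, ENNReal.inv_mul_cancel hne hnt, one_mul]
      _ = ((n : ℝ≥0∞) + 1)⁻¹ := by rw [h1, mul_one]

  -- identify the target event with the count of smaller values
  set S : Set (Fin (n+1) → ℝ) :=
    {x | orderStat n k (fun i : Fin n => x i.castSucc) < x (Fin.last n)} with hS
  have hcnt_last : ∀ x : Fin (n+1) → ℝ,
      cnt (Fin.last n) x =
        (Finset.univ.filter fun i : Fin n => x i.castSucc < x (Fin.last n)).card := by
    intro x
    simp only [hcnt]
    rw [Finset.card_filter, Finset.card_filter, Fin.sum_univ_castSucc]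
    simp
  have hS_eq : S = ⋃ m ∈ Finset.Icc k n, E (Fin.last n) m := by
    ext x
    simp only [hS, Set.mem_setOf_eq, Set.mem_iUnion, Finset.mem_Icc, hE, Set.mem_preimage,
      Set.mem_singleton_iff, exists_prop]
    rw [orderStat_lt_iff hk1 hkn, ← hcnt_last x]
    constructor
    · intro h; exact ⟨cnt (Fin.last n) x, ⟨h, hcnt_le _ x⟩, rfl⟩
    · rintro ⟨m, ⟨hkm, _⟩, rfl⟩; exact hkm
  have hS_meas : MeasurableSet S := by
    rw [hS_eq]; exact (Finset.Icc k n).measurableSet_biUnion fun m _ => hE_meas _ m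
  have hνS : ν S = (Finset.Icc k n).card * ((n : ℝ≥0∞) + 1)⁻¹ := by
    rw [hS_eq, measure_biUnion_finset ?disj (fun m _ => hE_meas _ m)]
    · rw [Finset.sum_congr rfl (fun m hm => hElast m (Finset.mem_Icc.mp hm).2),
        Finset.sum_const, nsmul_eq_mul]
    case disj =>
      intro a ha b hb hab
      refine Set.disjoint_left.mpr ?_
      intro x hxa hxb
      simp only [hE, Set.mem_preimage, Set.mem_singleton_iff] at hxa hxb
      exact hab (hxa.symm.trans hxb)
  have htarget : {ω | orderStat n k (fun i => X i ω) < Y ω} = Z ⁻¹' S := by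
    ext ω
    simp only [Set.mem_setOf_eq, Set.mem_preimage, hS]
    have h1 : (fun i : Fin n => Z ω i.castSucc) = fun i => X i ω := by
      funext i
      simp [hZdef, hf, Fin.snoc_castSucc]
    have h2 : Z ω (Fin.last n) = Y ω := by simp [hZdef, hf, Fin.snoc_last]
    rw [h1, h2]
  rw [htarget, ← Measure.map_apply hZ hS_meas, hZmap, hνS, Nat.card_Icc]
  -- final arithmetic
  have hkreal : ((n:ℝ)+1) * (1 - κ) ≤ k := by rw [hk]; exact Nat.le_ceil _
  have hnum : ((n + 1 - k : ℕ) : ℝ) ≤ ((n:ℝ)+1) * κ := by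
    have hkn1 : k ≤ n + 1 := le_trans hkn (Nat.le_succ n)
    rw [Nat.cast_sub hkn1]
    push_cast
    nlinarith
  have hstep : ((n + 1 - k : ℕ) : ℝ≥0∞) ≤ ENNReal.ofReal (((n:ℝ)+1) * κ) := by
    rw [← ENNReal.ofReal_natCast]
    exact ENNReal.ofReal_le_ofReal hnum
  have hcast : ((n:ℝ≥0∞)+1) = ENNReal.ofReal ((n:ℝ)+1) := by
    rw [ENNReal.ofReal_add (by positivity) zero_le_one]
    simp [ENNReal.ofReal_natCast]
  calc ((n + 1 - k : ℕ) : ℝ≥0∞) * ((n : ℝ≥0∞) + 1)⁻¹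
      ≤ ENNReal.ofReal (((n:ℝ)+1) * κ) * ((n : ℝ≥0∞) + 1)⁻¹ := mul_le_mul_left hstep _
    _ = ENNReal.ofReal κ := by
        rw [ENNReal.ofReal_mul (le_of_lt hnpos), mul_comm (ENNReal.ofReal ((n:ℝ)+1)) _,
          mul_assoc, ← hcast, ENNReal.mul_inv_cancel (by simp) (by simp), mul_one]
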